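/- Let k ≥ 3 and 2 ≤ t ≤ k. The two expressions for G_{k,t}(x) agree as polynomials: (1/x)(Σ_{j=0}^{t-1} C(k,j)(x-1)^{k-j} + (-1)^{k-t}C(k-1,t-1)) = (1/x)(x^k - Σ_{j=t}^{k-1} (-1)^{j-t} C(k,j) C(j-1, t-1) x^{k-j}). -/

import Mathlib

lemma alt_expand (n : ℕ) (x : ℚ) :
    (x - 1) ^ n = ∑ i ∈ Finset.range (n + 1), (-1 : ℚ) ^ i * n.choose i * x ^ (n - i) := by
  rw [sub_eq_add_neg, add_pow, ← Finset.sum_range_reflect]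
  apply Finset.sum_congr rfl
  intro i hi
  rw [Finset.mem_range, Nat.lt_succ_iff] at hi
  have h1 : n + 1 - 1 - i = n - i := by omega
  rw [h1, Nat.sub_sub_self hi, Nat.choose_symm hi]
  ring

lemma expand' (d : ℕ) (x : ℚ) :
    (x - 1) ^ (d + 1) = x ^ (d + 1) +
      ∑ i ∈ Finset.range d, (-1 : ℚ) ^ (i + 1) * ((d + 1).choose (i + 1)) * x ^ (d - i) +
      (-1 : ℚ) ^ (d + 1) := by
  rw [alt_expand]
  rw [show d + 1 + 1 = (d + 1) + 1 from rfl, Finset.sum_range_succ' _ (d + 1),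
    Finset.sum_range_succ]
  simp [Nat.succ_sub_succ]
  ring

lemma key (k : ℕ) (x : ℚ) : ∀ d t : ℕ, 1 ≤ t → t + d = k →
    (∑ j ∈ Finset.range t, (k.choose j : ℚ) * (x - 1) ^ (k - j) +
        (-1) ^ (k - t) * ((k - 1).choose (t - 1) : ℚ)) =
      (x ^ k - ∑ j ∈ Finset.Icc t (k - 1),
        (-1 : ℚ) ^ (j - t) * (k.choose j : ℚ) * ((j - 1).choose (t - 1) : ℚ) * x ^ (k - j)) := by
  intro d
  induction d with
  | zero =>
      intro t ht hk
      subst hk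
      simp only [Nat.add_zero] at *
      have hIcc : Finset.Icc t (t - 1) = ∅ := by
        rw [Finset.Icc_eq_empty_iff]; omega
      rw [hIcc, Finset.sum_empty, Nat.sub_self, pow_zero, Nat.choose_self]
      -- goal: ∑ j ∈ range t, C(t,j)(x-1)^{t-j} + 1 = x^t
      have h1 : (x : ℚ) ^ t = ((1 : ℚ) + (x - 1)) ^ t := by ring_nf
      rw [h1, add_pow, Finset.sum_range_succ]
      simp only [one_pow, one_mul, Nat.sub_self, pow_zero, Nat.choose_self, Nat.cast_one, mul_one]
      have h2 : ∑ j ∈ Finset.range t, ((t.choose j : ℚ)) * (x - 1) ^ (t - j) =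
          ∑ j ∈ Finset.range t, (x - 1) ^ (t - j) * (t.choose j : ℚ) :=
        Finset.sum_congr rfl (fun j _ => by ring)
      rw [sub_zero, h2]
  | succ d ih =>
      intro t ht hkd
      have hk' : (t + 1) + d = k := by omega
      have iht := ih (t + 1) (by omega) hk'
      simp only [Nat.add_sub_cancel] at iht
      have hkt : k - t = d + 1 := by omega
      have hkt1 : k - (t + 1) = d := by omega
      rw [Finset.sum_range_succ, hkt, hkt1] at iht
      -- convert Icc sums to range sums
      have eB : ∑ j ∈ Finset.Icc t (k - 1),
            (-1 : ℚ) ^ (j - t) * (k.choose j : ℚ) * ((j - 1).choose (t - 1) : ℚ) * x ^ (k - j)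
          = (k.choose t : ℚ) * x ^ (d + 1) +
            ∑ i ∈ Finset.range d,
              (-1 : ℚ) ^ (i + 1) * (k.choose (t + 1 + i) : ℚ) * ((t + i).choose (t - 1) : ℚ) * x ^ (d - i) := by
        rw [← Finset.Ico_add_one_right_eq_Icc, show k - 1 + 1 = k from by omega,
          Finset.sum_Ico_eq_sum_range, hkt, Finset.sum_range_succ']
        rw [add_comm]
        congr 1
        · simp only [Nat.add_zero]
          rw [Nat.sub_self, pow_zero, one_mul, Nat.choose_self, Nat.cast_one, mul_one, hkt]
        · apply Finset.sum_congr rfl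
          intro i hi
          rw [Finset.mem_range] at hi
          rw [show t + (i + 1) - t = i + 1 from by omega,
            show t + (i + 1) = t + 1 + i from by omega,
            show t + 1 + i - 1 = t + i from by omega,
            show k - (t + 1 + i) = d - i from by omega]
      have eB' : ∑ j ∈ Finset.Icc (t + 1) (k - 1),
            (-1 : ℚ) ^ (j - (t + 1)) * (k.choose j : ℚ) * ((j - 1).choose t : ℚ) * x ^ (k - j)
          = ∑ i ∈ Finset.range d,
              (-1 : ℚ) ^ i * (k.choose (t + 1 + i) : ℚ) * ((t + i).choose t : ℚ) * x ^ (d - i) := by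
        rw [← Finset.Ico_add_one_right_eq_Icc, show k - 1 + 1 = k from by omega,
          Finset.sum_Ico_eq_sum_range, show k - (t + 1) = d from by omega]
        apply Finset.sum_congr rfl
        intro i hi
        rw [Finset.mem_range] at hi
        rw [show t + 1 + i - (t + 1) = i from by omega,
          show t + 1 + i - 1 = t + i from by omega,
          show k - (t + 1 + i) = d - i from by omega]
      rw [eB'] at iht
      rw [hkt, eB]
      -- key sum identity
      have hsum : ∑ i ∈ Finset.range d,
            (-1 : ℚ) ^ i * (k.choose (t + 1 + i) : ℚ) * ((t + i).choose t : ℚ) * x ^ (d - i)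
          - ∑ i ∈ Finset.range d,
            (-1 : ℚ) ^ (i + 1) * (k.choose (t + 1 + i) : ℚ) * ((t + i).choose (t - 1) : ℚ) * x ^ (d - i)
          = -(k.choose t : ℚ) * ∑ i ∈ Finset.range d,
            (-1 : ℚ) ^ (i + 1) * ((d + 1).choose (i + 1) : ℚ) * x ^ (d - i) := by
        rw [← Finset.sum_sub_distrib, Finset.mul_sum]
        apply Finset.sum_congr rfl
        intro i hi
        rw [Finset.mem_range] at hi
        have hnat : k.choose (t + 1 + i) * ((t + 1 + i).choose t) =
            k.choose t * ((d + 1).choose (i + 1)) := by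
          rw [Nat.choose_mul (by omega),
            show k - t = d + 1 from by omega, show t + 1 + i - t = i + 1 from by omega]
        have hpas : (t + 1 + i).choose t = (t + i).choose (t - 1) + (t + i).choose t := by
          have h := Nat.choose_succ_succ (t + i) (t - 1)
          simp only [Nat.succ_eq_add_one] at h
          rw [show t - 1 + 1 = t from by omega] at h
          rw [show t + 1 + i = t + i + 1 from by omega, h]
        rw [hpas] at hnat
        have hq := congrArg (fun n : ℕ => (n : ℚ)) hnat
        push_cast at hq
        linear_combination ((-1 : ℚ) ^ i * x ^ (d - i)) * hq
      have hpascal : ((k - 1).choose (t - 1) : ℚ) + ((k - 1).choose t : ℚ) = (k.choose t : ℚ) := by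
        have h := Nat.choose_succ_succ (k - 1) (t - 1)
        simp only [Nat.succ_eq_add_one] at h
        rw [show t - 1 + 1 = t from by omega, show k - 1 + 1 = k from by omega] at h
        exact_mod_cast h.symm
      have hexp := expand' d x
      linear_combination iht - hsum - (k.choose t : ℚ) * hexp + (-1 : ℚ) ^ (d + 1) * hpascal


theorem G_two_forms_agree (k t : ℕ) (hk : 3 ≤ k) (ht1 : 2 ≤ t) (ht2 : t ≤ k)
    (x : ℚ) (hx : x ≠ 0) :
    (1 / x) * (∑ j ∈ Finset.range t, (k.choose j : ℚ) * (x - 1) ^ (k - j) +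
        (-1) ^ (k - t) * ((k - 1).choose (t - 1) : ℚ)) =
      (1 / x) * (x ^ k - ∑ j ∈ Finset.Icc t (k - 1),
        (-1 : ℚ) ^ (j - t) * (k.choose j : ℚ) * ((j - 1).choose (t - 1) : ℚ) * x ^ (k - j)) := by
  have h := key k x (k - t) t (by omega) (by omega)
  rw [h]
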